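/- arXiv:2208.05278 — 2 statements merged into one kernel-verified Lean document; each statement's English description precedes it below -/
import Mathlib

section
/- For k_x = 2 and any k_z ≥ 3, the condition k_V > (k_z+1)/2 required by the median-of-medians estimator is implied by the condition C(k_V, 2) > C(k_z, 2)/2 required by the naive median estimator, i.e., if binom(k_V,2) > binom(k_z,2)/2 then k_V > (k_z+1)/2; moreover the converse fails for k_z = 21 with k_V = 12. -/
theorem naive_median_condition_implies_mm_condition :
    (∀ kz kV : ℕ, 3 ≤ kz → kV ≤ kz →
      (Nat.choose kV 2 : ℝ) > (Nat.choose kz 2 : ℝ) / 2 →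
      (kV : ℝ) > ((kz : ℝ) + 1) / 2) ∧
    ((12 : ℝ) > ((21 : ℝ) + 1) / 2 ∧
      ¬ ((Nat.choose 12 2 : ℝ) > (Nat.choose 21 2 : ℝ) / 2)) := by
  refine ⟨?_, by norm_num [Nat.choose], by norm_num [Nat.choose]⟩
  intro kz kV h3 hle h
  by_contra hc
  push_neg at hc
  rw [Nat.cast_choose_two, Nat.cast_choose_two] at h
  have h0 : (0:ℝ) ≤ kV := Nat.cast_nonneg _
  have h1 : (3:ℝ) ≤ kz := by exact_mod_cast h3
  nlinarith [sq_nonneg ((kz:ℝ) - 1), sq_nonneg ((kz:ℝ) + 1 - 2*kV), mul_nonneg h0 h0]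
end

section
/- Let J be a finite index set partitioned into V and A with |V| > |J|/2. Suppose for j ∈ V, W_{n,j} is tight (O_p(1)), and for j ∈ A, W_{n,j} = √n·γ_j + O_p(1) with γ_j ≠ 0 (so |W_{n,j}| →_p ∞). Then with probability tending to one the median of {W_{n,j}}_{j∈J} lies between the minimum and maximum of {W_{n,j}}_{j∈V}, and hence the median is O_p(1). -/
open MeasureTheory

noncomputable def median {n : ℕ} (v : Fin n → ℝ) : ℝ :=
  if h : n = 0 then 0
  else if n % 2 = 1 then
    v (Tuple.sort v ⟨n / 2, Nat.div_lt_self (Nat.pos_of_ne_zero h) one_lt_two⟩)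
  else
    (v (Tuple.sort v ⟨n / 2 - 1,
        lt_of_le_of_lt (Nat.sub_le _ _) (Nat.div_lt_self (Nat.pos_of_ne_zero h) one_lt_two)⟩)
     + v (Tuple.sort v ⟨n / 2, Nat.div_lt_self (Nat.pos_of_ne_zero h) one_lt_two⟩)) / 2

open Finset in
lemma aux_sorted_le {p : ℕ} (v : Fin p → ℝ) (b : ℝ) (j : Fin p)
    (hj : (j : ℕ) < Fintype.card {i // v i ≤ b}) : v (Tuple.sort v j) ≤ b := by
  have hcard : Fintype.card {i // (v ∘ Tuple.sort v) i ≤ b} = Fintype.card {i // v i ≤ b} :=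
    Fintype.card_congr ((Tuple.sort v).subtypeEquiv (fun i => Iff.rfl))
  have := (Tuple.lt_card_le_iff_apply_le_of_monotone (f := v ∘ Tuple.sort v) (a := b)
    (j := j) (Tuple.monotone_sort v)).mp (by rw [← Fintype.card_subtype, hcard]; exact hj)
  exact this

lemma aux_le_sorted {p : ℕ} (v : Fin p → ℝ) (a : ℝ) (j : Fin p)
    (hj : p ≤ (j : ℕ) + Fintype.card {i // a ≤ v i}) : a ≤ v (Tuple.sort v j) := by
  by_contra h
  push_neg at h
  have hmono := Tuple.monotone_sort v
  have hcard : Fintype.card {i // a ≤ (v ∘ Tuple.sort v) i} = Fintype.card {i // a ≤ v i} :=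
    Fintype.card_congr ((Tuple.sort v).subtypeEquiv (fun i => Iff.rfl))
  have hsub : Fintype.card {i // a ≤ (v ∘ Tuple.sort v) i} ≤ (Finset.Ioi j).card := by
    rw [Fintype.card_subtype]
    apply Finset.card_le_card
    intro i hi
    simp only [Finset.mem_filter, Finset.mem_univ, true_and] at hi
    simp only [Finset.mem_Ioi]
    by_contra hij
    push_neg at hij
    exact absurd (hi.trans (hmono hij)) (not_le.mpr h)
  rw [Fin.card_Ioi] at hsub
  rw [hcard] at hsub
  have := j.isLt
  omega

lemma median_mem {p : ℕ} (hp : 0 < p) (V : Finset (Fin p)) (hVne : V.Nonempty)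
    (hmaj : p < 2 * V.card) (v : Fin p → ℝ) :
    V.inf' hVne v ≤ median v ∧ median v ≤ V.sup' hVne v := by
  set a := V.inf' hVne v with ha
  set b := V.sup' hVne v with hb
  have hub : V.card ≤ Fintype.card {i // v i ≤ b} := by
    rw [Fintype.card_subtype]
    apply Finset.card_le_card
    intro i hi
    simp only [Finset.mem_filter, Finset.mem_univ, true_and]
    exact Finset.le_sup' v hi
  have hlb : V.card ≤ Fintype.card {i // a ≤ v i} := by
    rw [Fintype.card_subtype]
    apply Finset.card_le_card
    intro i hi
    simp only [Finset.mem_filter, Finset.mem_univ, true_and]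
    exact Finset.inf'_le v hi
  have key : ∀ (k : ℕ) (hk : k < p), k ≤ p / 2 → p / 2 ≤ k + (p + 1) % 2 →
      a ≤ v (Tuple.sort v ⟨k, hk⟩) ∧ v (Tuple.sort v ⟨k, hk⟩) ≤ b := by
    intro k hk hj1 hj2
    constructor
    · exact aux_le_sorted v a ⟨k, hk⟩ (by simp only [Fin.val_mk]; omega)
    · exact aux_sorted_le v b ⟨k, hk⟩ (by simp only [Fin.val_mk]; omega)
  unfold median
  rw [dif_neg hp.ne']
  by_cases hpar : p % 2 = 1
  · rw [if_pos hpar]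
    exact key _ _ (le_refl _) (by omega)
  · rw [if_neg hpar]
    have h1 := key (p / 2 - 1) (by omega) (by omega) (by omega)
    have h2 := key (p / 2) (by omega) (le_refl _) (by omega)
    constructor
    · have := h1.1; have := h2.1; linarith
    · have := h1.2; have := h2.2; linarith

theorem median_between_valid_extremes {Ω : Type*} [MeasurableSpace Ω]
    (μ : Measure Ω) [IsProbabilityMeasure μ] {p : ℕ} (hp : 0 < p)
    (V A : Finset (Fin p)) (hVA : Disjoint V A) (hunion : V ∪ A = Finset.univ)
    (hmaj : (V.card : ℝ) > (p : ℝ) / 2) (hVne : V.Nonempty)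
    (W : ℕ → Fin p → Ω → ℝ) (γ : Fin p → ℝ) (R : ℕ → Fin p → Ω → ℝ)
    (htightV : ∀ j ∈ V, ∀ ε : ℝ, 0 < ε → ∃ M : ℝ, ∀ n : ℕ,
      (μ {ω | M < |W n j ω|}).toReal < ε)
    (hA : ∀ j ∈ A, γ j ≠ 0 ∧
      (∀ n : ℕ, ∀ ω : Ω, W n j ω = Real.sqrt n * γ j + R n j ω) ∧
      (∀ ε : ℝ, 0 < ε → ∃ M : ℝ, ∀ n : ℕ,
        (μ {ω | M < |R n j ω|}).toReal < ε)) :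
    Filter.Tendsto
      (fun n => (μ {ω | V.inf' hVne (fun j => W n j ω) ≤ median (fun j => W n j ω)
          ∧ median (fun j => W n j ω) ≤ V.sup' hVne (fun j => W n j ω)}).toReal)
      Filter.atTop (nhds 1)
    ∧ (∀ ε : ℝ, 0 < ε → ∃ M : ℝ, ∀ n : ℕ,
        (μ {ω | M < |median (fun j => W n j ω)|}).toReal < ε) := by
  have hmaj' : p < 2 * V.card := by
    have : (p : ℝ) < 2 * (V.card : ℝ) := by linarith
    exact_mod_cast this
  have hmed : ∀ (v : Fin p → ℝ), V.inf' hVne v ≤ median v ∧ median v ≤ V.sup' hVne v :=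
    fun v => median_mem hp V hVne hmaj' v
  constructor
  · have hall : ∀ n : ℕ, {ω : Ω | V.inf' hVne (fun j => W n j ω) ≤ median (fun j => W n j ω)
        ∧ median (fun j => W n j ω) ≤ V.sup' hVne (fun j => W n j ω)} = Set.univ := by
      intro n
      apply Set.eq_univ_of_forall
      intro ω
      exact hmed (fun j => W n j ω)
    simp only [hall, measure_univ, ENNReal.toReal_one]
    exact tendsto_const_nhds
  · intro ε hε
    have hcard : (0 : ℝ) < V.card := by exact_mod_cast hVne.card_pos
    have hδ : 0 < ε / V.card := div_pos hε hcard
    have hchoice := fun j (hj : j ∈ V) => htightV j hj (ε / V.card) hδ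
    choose M hM using hchoice
    set M' : Fin p → ℝ := fun j => if h : j ∈ V then M j h else 0 with hM'
    refine ⟨V.sup' hVne M', fun n => ?_⟩
    set Mb := V.sup' hVne M' with hMb
    have hsub : {ω : Ω | Mb < |median (fun j => W n j ω)|} ⊆
        ⋃ j ∈ V, {ω : Ω | M' j < |W n j ω|} := by
      intro ω hω
      simp only [Set.mem_setOf_eq] at hω
      set v : Fin p → ℝ := fun j => W n j ω with hv
      have habs : |median v| ≤ V.sup' hVne (fun j => |v j|) := by
        have h1 := (hmed v).1
        have h2 := (hmed v).2
        rw [abs_le]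
        constructor
        · obtain ⟨j, hj, hje⟩ := Finset.exists_mem_eq_inf' hVne v
          have : -(v j) ≤ |v j| := neg_le_abs _
          have h3 : |v j| ≤ V.sup' hVne (fun j => |v j|) := Finset.le_sup' (fun j => |v j|) hj
          rw [hje] at h1
          linarith
        · obtain ⟨j, hj, hje⟩ := Finset.exists_mem_eq_sup' hVne v
          have : v j ≤ |v j| := le_abs_self _
          have h3 : |v j| ≤ V.sup' hVne (fun j => |v j|) := Finset.le_sup' (fun j => |v j|) hj
          rw [hje] at h2
          linarith
      obtain ⟨j, hj, hje⟩ := Finset.exists_mem_eq_sup' hVne (fun j => |v j|)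
      have hMj : M' j ≤ Mb := Finset.le_sup' M' hj
      have : M' j < |v j| := by rw [hje] at habs; linarith
      exact Set.mem_biUnion hj this
    have hle := (measure_mono (μ := μ) hsub).trans (measure_biUnion_finset_le V _)
    have hfin : ∀ j ∈ V, μ {ω : Ω | M' j < |W n j ω|} ≠ ⊤ := fun j hj => measure_ne_top μ _
    have hsum_ne : (∑ j ∈ V, μ {ω : Ω | M' j < |W n j ω|}) ≠ ⊤ :=
      ENNReal.sum_ne_top.mpr hfin
    calc (μ {ω : Ω | Mb < |median (fun j => W n j ω)|}).toReal
        ≤ (∑ j ∈ V, μ {ω : Ω | M' j < |W n j ω|}).toReal := ENNReal.toReal_mono hsum_ne hle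
      _ = ∑ j ∈ V, (μ {ω : Ω | M' j < |W n j ω|}).toReal := ENNReal.toReal_sum hfin
      _ < ∑ j ∈ V, ε / V.card := by
          apply Finset.sum_lt_sum_of_nonempty hVne
          intro j hj
          have : M' j = M j hj := dif_pos hj
          rw [this]
          exact hM j hj n
      _ = ε := by
          rw [Finset.sum_const, nsmul_eq_mul]
          field_simp
end
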